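/- Consider the one-parameter family of hyperplanes L(t) = V(a₀(t) + a₁(t)x₁ + ... + a_d(t)x_d) in 𝔸^d × Spec ℂ[[t]], where a_i(t) ∈ ℂ[[t]], a₁(0) ≠ 0, and a₀(0) = a₂(0) = ... = a_d(0) = 0. In the blow up of 𝔸^d × Spec ℂ[[t]] along Y = V(x₁, t) (a ℙ¹-bundle over the exceptional divisor E ≅ 𝔸^{d-1} × ℙ¹), the limit of the strict transform of L(t) at t = 0 is the section of E given by [s₀ : s₁] = [K₀ : -a₁(0)], where K₀ = lim_{t→0}(a₀(t)/t + (a₂(t)/t)x₂ + ... + (a_d(t)/t)x_d). In particular, this limiting section depends only on a₁(0) and on the first-order coefficients a₀'(0), a₂'(0), ..., a_d'(0). -/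

import Mathlib

open PowerSeries

/-- In the blow up of `𝔸^d × Spec ℂ[[t]]` along `V(x₁,t)`, in the chart
`σ₀ = s₀/s₁`, substituting `x₁ = t σ₀` into `a₀(t) + a₁(t)x₁ + ⋯ + a_d(t)x_d` and dividing
by `t`, the value at `t = 0` is `K₀ + a₁(0)σ₀` where
`K₀ = a₀'(0) + a₂'(0)x₂ + ⋯ + a_d'(0)x_d`; it vanishes (i.e. the point lies on the limit
of the strict transform) iff `σ₀ = -K₀/a₁(0)`. In particular the limiting section depends
only on `a₁(0)` and the first-order coefficients of `a₀, a₂, …, a_d`. -/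
theorem stmt7 (d : ℕ) (hd : 1 ≤ d) (a : ℕ → PowerSeries ℂ)
    (h1 : constantCoeff (a 1) ≠ 0)
    (h0 : constantCoeff (a 0) = 0)
    (hi : ∀ i, 2 ≤ i → i ≤ d → constantCoeff (a i) = 0)
    (x : ℕ → ℂ) (σ₀ K₀ : ℂ)
    (hK₀ : K₀ = coeff 1 (a 0) + ∑ i ∈ Finset.Icc 2 d, coeff 1 (a i) * x i)
    (G : PowerSeries ℂ)
    (hG : PowerSeries.X * G =
      a 0 + a 1 * (PowerSeries.X * PowerSeries.C σ₀) +
        ∑ i ∈ Finset.Icc 2 d, a i * PowerSeries.C (x i)) :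
    constantCoeff G = K₀ + constantCoeff (a 1) * σ₀ ∧
    (constantCoeff G = 0 ↔ σ₀ = -K₀ / constantCoeff (a 1)) := by
  have h2 : a 1 * (PowerSeries.X * PowerSeries.C σ₀)
      = PowerSeries.X * (a 1 * PowerSeries.C σ₀) := by ring
  rw [h2] at hG
  have key := congrArg (coeff 1) hG
  simp only [map_add, map_sum, coeff_mul_C, coeff_succ_X_mul,
    coeff_zero_eq_constantCoeff, map_mul, constantCoeff_C] at key
  have hc : constantCoeff G = K₀ + constantCoeff (a 1) * σ₀ := by
    rw [key, hK₀]; ring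
  refine ⟨hc, ?_⟩
  rw [hc]
  rw [eq_div_iff h1]
  constructor
  · intro h; linear_combination h
  · intro h; linear_combination h
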